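/- Suppose R is a Kähler curvature-type tensor on C^n that is Einstein with R_{iī} := ∑_j R(e_i,ē_i,e_j,ē_j) = λ for every unit vector e_i completed to a unitary frame, i.e., the Ricci curvature equals λ. Then for any unitary frame {e_a} = {∑_i T_{ai} E_i} (T ∈ U(n)) with reference unitary frame {E_i}, and any reals x_1,...,x_n, one has (1/2)∑_{a,b} R(e_a,ē_a,e_b,ē_b)(x_a - x_b)² = λ ∑_a x_a² - ∑_{i,j,k,l} R(E_i,Ē_j,E_k,Ē_l) P_{ij̄} P_{kl̄}, where P = ᵗT Λ_x T̄ and Λ_x = diag(x_1,...,x_n); moreover P is Hermitian with |P|² = ∑_a x_a². -/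

import Mathlib

open Matrix

/-- Evaluation of a curvature-type tensor given by components `R i j k l` in the
reference unitary frame `{E_i}` (identified with the standard basis of `ℂ^n`):
`R(X, Ȳ, Z, W̄)`, `ℂ`-linear in `X, Z` and conjugate-linear in `Y, W`. -/
noncomputable def curvEval {n : ℕ} (R : Fin n → Fin n → Fin n → Fin n → ℂ)
    (X Y Z W : Fin n → ℂ) : ℂ :=
  ∑ i, ∑ j, ∑ k, ∑ l,
    R i j k l * X i * (starRingEnd ℂ) (Y j) * Z k * (starRingEnd ℂ) (W l)

private lemma swap4 {n : ℕ} (f : Fin n → Fin n → Fin n → Fin n → ℂ) :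
    ∑ i, ∑ j, ∑ k, ∑ l, f i j k l = ∑ k, ∑ l, ∑ i, ∑ j, f i j k l := by
  calc ∑ i, ∑ j, ∑ k, ∑ l, f i j k l
      = ∑ i, ∑ k, ∑ j, ∑ l, f i j k l := Finset.sum_congr rfl fun i _ => Finset.sum_comm
    _ = ∑ k, ∑ i, ∑ j, ∑ l, f i j k l := Finset.sum_comm
    _ = ∑ k, ∑ i, ∑ l, ∑ j, f i j k l :=
        Finset.sum_congr rfl fun k _ => Finset.sum_congr rfl fun i _ => Finset.sum_comm
    _ = ∑ k, ∑ l, ∑ i, ∑ j, f i j k l := Finset.sum_congr rfl fun k _ => Finset.sum_comm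

private lemma move5 {n : ℕ} (g : Fin n → Fin n → Fin n → Fin n → Fin n → ℂ) :
    ∑ a, ∑ i, ∑ j, ∑ k, ∑ l, g a i j k l = ∑ i, ∑ j, ∑ k, ∑ l, ∑ a, g a i j k l := by
  rw [Finset.sum_comm]
  refine Finset.sum_congr rfl fun i _ => ?_
  rw [Finset.sum_comm]
  refine Finset.sum_congr rfl fun j _ => ?_
  rw [Finset.sum_comm]
  exact Finset.sum_congr rfl fun k _ => Finset.sum_comm

/-- For an Einstein Kähler curvature-type tensor with Ricci curvature `λ`, in any
unitary frame `e_a = ∑_i T_{ai} E_i` and for any reals `x`,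
`(1/2)∑_{a,b} R(e_a,ē_a,e_b,ē_b)(x_a - x_b)² = λ ∑ x_a² - ∑ R_{ij̄kl̄} P_{ij̄} P_{kl̄}`
where `P = ᵗT Λ_x T̄`; moreover `P` is Hermitian with `|P|² = ∑ x_a²`. -/
theorem stmt15 {n : ℕ} (R : Fin n → Fin n → Fin n → Fin n → ℂ)
    (hsym1 : ∀ i j k l, R i j k l = R k j i l)
    (hsym2 : ∀ i j k l, R i j k l = (starRingEnd ℂ) (R j i l k))
    (lam : ℝ)
    (hEin : ∀ S ∈ Matrix.unitaryGroup (Fin n) ℂ, ∀ i : Fin n,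
      ∑ j, curvEval R (fun p => S i p) (fun p => S i p)
        (fun p => S j p) (fun p => S j p) = (lam : ℂ))
    (T : Matrix (Fin n) (Fin n) ℂ) (hT : T ∈ Matrix.unitaryGroup (Fin n) ℂ)
    (x : Fin n → ℝ)
    (e : Fin n → Fin n → ℂ) (he : ∀ a i, e a i = T a i)
    (P : Matrix (Fin n) (Fin n) ℂ)
    (hP : ∀ i j, P i j = ∑ a, T a i * ((x a : ℝ) : ℂ) * (starRingEnd ℂ) (T a j)) :
    (1/2 : ℂ) * ∑ a, ∑ b, curvEval R (e a) (e a) (e b) (e b) * (((x a - x b) ^ 2 : ℝ) : ℂ)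
      = (lam : ℂ) * ((∑ a, (x a) ^ 2 : ℝ) : ℂ)
        - ∑ i, ∑ j, ∑ k, ∑ l, R i j k l * P i j * P k l
    ∧ P.IsHermitian
    ∧ (∑ i, ∑ j, ‖P i j‖ ^ 2) = ∑ a, (x a) ^ 2 := by
  have hea : ∀ a, e a = fun p => T a p := fun a => funext (he a)
  set c := starRingEnd ℂ with hc
  -- full symmetry R i j k l = R k l i j
  have Rsym : ∀ i j k l, R i j k l = R k l i j := by
    intro i j k l
    have h1 : R i j k l = R i l k j := by
      rw [hsym2 i j k l, hsym1 j i l k, ← hsym2 i l k j]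
    exact h1.trans (hsym1 i l k j)
  set A : Fin n → Fin n → ℂ := fun a b => curvEval R (e a) (e a) (e b) (e b) with hA
  have hAexp : ∀ a b, A a b
      = ∑ i, ∑ j, ∑ k, ∑ l, R i j k l * T a i * c (T a j) * T b k * c (T b l) := by
    intro a b
    simp only [hA, curvEval, hea, ← hc]
  -- row sums
  have hrow : ∀ a, ∑ b, A a b = (lam : ℂ) := by
    intro a
    simpa only [hA, hea] using hEin T hT a
  -- symmetry of A
  have hAsymm : ∀ a b, A a b = A b a := by
    intro a b
    rw [hAexp, hAexp]
    calc ∑ i, ∑ j, ∑ k, ∑ l, R i j k l * T a i * c (T a j) * T b k * c (T b l)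
        = ∑ i, ∑ j, ∑ k, ∑ l, R k l i j * T a i * c (T a j) * T b k * c (T b l) := by
          refine Finset.sum_congr rfl fun i _ => Finset.sum_congr rfl fun j _ =>
            Finset.sum_congr rfl fun k _ => Finset.sum_congr rfl fun l _ => ?_
          rw [Rsym i j k l]
      _ = ∑ k, ∑ l, ∑ i, ∑ j, R k l i j * T a i * c (T a j) * T b k * c (T b l) :=
          swap4 _
      _ = ∑ i, ∑ j, ∑ k, ∑ l, R i j k l * T b i * c (T b j) * T a k * c (T a l) := by
          refine Finset.sum_congr rfl fun i _ => Finset.sum_congr rfl fun j _ =>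
            Finset.sum_congr rfl fun k _ => Finset.sum_congr rfl fun l _ => ?_
          ring
  have hcol : ∀ b, ∑ a, A a b = (lam : ℂ) := by
    intro b
    rw [Finset.sum_congr rfl fun a _ => hAsymm a b]
    exact hrow b
  -- the quadratic-form identity
  have hQ : ∑ a, ∑ b, A a b * ((x a : ℂ) * (x b : ℂ))
      = ∑ i, ∑ j, ∑ k, ∑ l, R i j k l * P i j * P k l := by
    calc ∑ a, ∑ b, A a b * ((x a : ℂ) * (x b : ℂ))
        = ∑ a, ∑ b, ∑ i, ∑ j, ∑ k, ∑ l,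
            R i j k l * T a i * c (T a j) * T b k * c (T b l) * ((x a : ℂ) * (x b : ℂ)) := by
          refine Finset.sum_congr rfl fun a _ => Finset.sum_congr rfl fun b _ => ?_
          rw [hAexp]
          simp only [Finset.sum_mul]
      _ = ∑ a, ∑ i, ∑ j, ∑ k, ∑ l, ∑ b,
            R i j k l * T a i * c (T a j) * T b k * c (T b l) * ((x a : ℂ) * (x b : ℂ)) :=
          Finset.sum_congr rfl fun a _ => move5 _
      _ = ∑ i, ∑ j, ∑ k, ∑ l, ∑ a, ∑ b,
            R i j k l * T a i * c (T a j) * T b k * c (T b l) * ((x a : ℂ) * (x b : ℂ)) :=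
          move5 _
      _ = ∑ i, ∑ j, ∑ k, ∑ l, R i j k l * P i j * P k l := by
          refine Finset.sum_congr rfl fun i _ => Finset.sum_congr rfl fun j _ =>
            Finset.sum_congr rfl fun k _ => Finset.sum_congr rfl fun l _ => ?_
          rw [hP i j, hP k l, mul_assoc, Finset.sum_mul_sum, Finset.mul_sum]
          refine Finset.sum_congr rfl fun a _ => ?_
          rw [Finset.mul_sum]
          refine Finset.sum_congr rfl fun b _ => ?_
          ring
  -- first part
  have part1 : (1/2 : ℂ) * ∑ a, ∑ b, curvEval R (e a) (e a) (e b) (e b) * (((x a - x b) ^ 2 : ℝ) : ℂ)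
      = (lam : ℂ) * ((∑ a, (x a) ^ 2 : ℝ) : ℂ)
        - ∑ i, ∑ j, ∑ k, ∑ l, R i j k l * P i j * P k l := by
    have hS1 : ∑ a, ∑ b, A a b * ((x a : ℂ))^2 = (lam : ℂ) * ∑ a, ((x a : ℂ))^2 := by
      rw [Finset.mul_sum]
      refine Finset.sum_congr rfl fun a _ => ?_
      rw [← Finset.sum_mul, hrow a]
    have hS2 : ∑ a, ∑ b, A a b * ((x b : ℂ))^2 = (lam : ℂ) * ∑ a, ((x a : ℂ))^2 := by
      rw [Finset.sum_comm, Finset.mul_sum]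
      refine Finset.sum_congr rfl fun b _ => ?_
      rw [← Finset.sum_mul, hcol b]
    have expand : ∑ a, ∑ b, A a b * (((x a - x b) ^ 2 : ℝ) : ℂ)
        = (∑ a, ∑ b, A a b * ((x a : ℂ))^2) + (∑ a, ∑ b, A a b * ((x b : ℂ))^2)
          - 2 * ∑ a, ∑ b, A a b * ((x a : ℂ) * (x b : ℂ)) := by
      simp only [Finset.mul_sum, ← Finset.sum_add_distrib, ← Finset.sum_sub_distrib]
      refine Finset.sum_congr rfl fun a _ => Finset.sum_congr rfl fun b _ => ?_
      push_cast
      ring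
    have hmain : ∑ a, ∑ b, curvEval R (e a) (e a) (e b) (e b) * (((x a - x b) ^ 2 : ℝ) : ℂ)
        = ∑ a, ∑ b, A a b * (((x a - x b) ^ 2 : ℝ) : ℂ) := rfl
    rw [hmain, expand, hS1, hS2, hQ]
    push_cast
    ring
  refine ⟨part1, ?_, ?_⟩
  · -- Hermitian
    ext i j
    rw [Matrix.conjTranspose_apply, hP i j, hP j i]
    rw [show (star (∑ a, T a j * ((x a : ℝ) : ℂ) * c (T a i)))
        = c (∑ a, T a j * ((x a : ℝ) : ℂ) * c (T a i)) from rfl, map_sum]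
    refine Finset.sum_congr rfl fun a _ => ?_
    simp only [_root_.map_mul, Complex.conj_conj, Complex.conj_ofReal, hc]
    ring
  · -- norm identity
    have hδ : ∀ a b, ∑ i, T a i * c (T b i) = if a = b then 1 else 0 := by
      intro a b
      have hU : T * star T = 1 := Matrix.mem_unitaryGroup_iff.mp hT
      have := congrArg (fun M => M a b) hU
      simpa [Matrix.mul_apply, Matrix.conjTranspose_apply, Matrix.one_apply, hc] using this
    have key : ((∑ i, ∑ j, ‖P i j‖ ^ 2 : ℝ) : ℂ) = ((∑ a, (x a) ^ 2 : ℝ) : ℂ) := by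
      push_cast
      calc ∑ i, ∑ j, ((‖P i j‖ : ℝ) : ℂ) ^ 2
          = ∑ i, ∑ j, P i j * c (P i j) := by
            refine Finset.sum_congr rfl fun i _ => Finset.sum_congr rfl fun j _ => ?_
            rw [Complex.mul_conj]
            norm_cast
            exact Complex.sq_norm _
        _ = ∑ i, ∑ j, ∑ a, ∑ b,
              (T a i * (x a : ℂ) * c (T a j)) * (c (T b i) * (x b : ℂ) * T b j) := by
            refine Finset.sum_congr rfl fun i _ => Finset.sum_congr rfl fun j _ => ?_
            rw [hP i j, map_sum]
            rw [Finset.sum_mul_sum]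
            refine Finset.sum_congr rfl fun a _ => Finset.sum_congr rfl fun b _ => ?_
            simp only [hc, _root_.map_mul, Complex.conj_conj, Complex.conj_ofReal]
        _ = ∑ a, ∑ b, ∑ i, ∑ j,
              (T a i * (x a : ℂ) * c (T a j)) * (c (T b i) * (x b : ℂ) * T b j) :=
            swap4 _
        _ = ∑ a, ∑ b, ((x a : ℂ) * (x b : ℂ)) *
              ((∑ i, T a i * c (T b i)) * (∑ j, T b j * c (T a j))) := by
            refine Finset.sum_congr rfl fun a _ => Finset.sum_congr rfl fun b _ => ?_
            rw [Finset.sum_mul_sum, Finset.mul_sum]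
            simp only [Finset.mul_sum]
            refine Finset.sum_congr rfl fun i _ => Finset.sum_congr rfl fun j _ => ?_
            ring
        _ = ∑ a, (x a : ℂ) ^ 2 := by
            refine Finset.sum_congr rfl fun a _ => ?_
            rw [Finset.sum_eq_single a]
            · rw [hδ a a, if_pos rfl]
              ring
            · intro b _ hb
              rw [hδ a b, if_neg (fun h => hb h.symm)]
              ring
            · intro h
              exact absurd (Finset.mem_univ a) h
    exact_mod_cast key
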